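/- Let G be a connected threshold graph on n vertices whose creation sequence contains exactly T ones (i.e., G has trace T). If q(G) = 2, then T ≥ ⌈n/2⌉. -/

import Mathlib

open Matrix BigOperators

/-- The threshold graph on `Fin n` given by a creation sequence `b`:
for `i < j`, vertices `i` and `j` are adjacent iff `b j = true`. -/
def ThresholdGraph {n : ℕ} (b : Fin n → Bool) : SimpleGraph (Fin n) where
  Adj i j := i ≠ j ∧ ((i < j ∧ b j = true) ∨ (j < i ∧ b i = true))
  symm := ⟨fun _ _ h => ⟨h.1.symm, h.2.symm⟩⟩
  loopless := ⟨fun _ h => h.1 rfl⟩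

/-- The threshold graph whose creation sequence is given by a list of booleans. -/
def thresholdOfList (L : List Bool) : SimpleGraph (Fin L.length) where
  Adj i j := i ≠ j ∧ ((i < j ∧ L.get j = true) ∨ (j < i ∧ L.get i = true))
  symm := ⟨fun _ _ h => ⟨h.1.symm, h.2.symm⟩⟩
  loopless := ⟨fun _ h => h.1 rfl⟩

/-- `S(G)`: real symmetric matrices whose off-diagonal nonzero pattern is given by `G`. -/
def SMat {n : ℕ} (G : SimpleGraph (Fin n)) : Set (Matrix (Fin n) (Fin n) ℝ) :=
  {A | A.IsSymm ∧ ∀ i j : Fin n, i ≠ j → (A i j ≠ 0 ↔ G.Adj i j)}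

/-- The number of distinct (real) eigenvalues of a matrix. -/
noncomputable def numEig {n : ℕ} (A : Matrix (Fin n) (Fin n) ℝ) : ℕ :=
  (spectrum ℝ A).ncard

/-- `q(G)`: the minimum number of distinct eigenvalues over matrices in `S(G)`. -/
noncomputable def qGraph {n : ℕ} (G : SimpleGraph (Fin n)) : ℕ :=
  sInf (numEig '' SMat G)

theorem quad_zero {n : ℕ} {A : Matrix (Fin n) (Fin n) ℝ} (hs : A.IsSymm)
    (l m : ℝ) (hev : ∀ x ∈ spectrum ℝ A, x = l ∨ x = m) :
    (A - l • 1) * (A - m • 1) = 0 := by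
  have hA : A.IsHermitian := by
    ext i j
    simpa using congrFun (congrFun hs i) j
  have hUU : (star (hA.eigenvectorUnitary : Matrix (Fin n) (Fin n) ℝ)) *
      (hA.eigenvectorUnitary : Matrix (Fin n) (Fin n) ℝ) = 1 :=
    Unitary.coe_star_mul_self _
  have hUU' : (hA.eigenvectorUnitary : Matrix (Fin n) (Fin n) ℝ) *
      (star (hA.eigenvectorUnitary : Matrix (Fin n) (Fin n) ℝ)) = 1 :=
    Unitary.coe_mul_star_self _
  set U := (hA.eigenvectorUnitary : Matrix (Fin n) (Fin n) ℝ)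
  have hdiag : ∀ x : ℝ, A - x • 1 = U * (diagonal (fun i => hA.eigenvalues i - x)) * star U := by
    intro x
    have h1 : (diagonal (fun i => hA.eigenvalues i - x) : Matrix (Fin n) (Fin n) ℝ)
        = diagonal (RCLike.ofReal ∘ hA.eigenvalues) - x • 1 := by
      ext i j
      by_cases h : i = j <;>
        simp [h, Matrix.diagonal_apply, Matrix.one_apply, RCLike.ofReal_real_eq_id]
    have hsp : U * diagonal (RCLike.ofReal ∘ hA.eigenvalues) * star U = A :=
      hA.spectral_theorem.symm
    rw [h1, Matrix.mul_sub, Matrix.sub_mul, hsp]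
    congr 1
    rw [Matrix.mul_smul, Matrix.smul_mul, Matrix.mul_one, hUU']
  rw [hdiag l, hdiag m]
  simp only [Matrix.mul_assoc]
  rw [← Matrix.mul_assoc (star U) U, hUU, Matrix.one_mul,
    ← Matrix.mul_assoc (diagonal fun i => hA.eigenvalues i - l), diagonal_mul_diagonal]
  have : (fun i => (hA.eigenvalues i - l) * (hA.eigenvalues i - m)) = fun _ => (0:ℝ) := by
    funext i
    rcases hev _ (hA.eigenvalues_mem_spectrum_real i) with h | h <;> rw [h] <;> ring
  rw [this]
  simp

/-- If a connected threshold graph on `n` vertices with trace `T`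
satisfies `q(G) = 2`, then `T ≥ ⌈n/2⌉`. -/
theorem stmt2 {n : ℕ} (hn : 1 ≤ n) (b : Fin n → Bool)
    (hb1 : b ⟨0, by omega⟩ = false) (hbn : b ⟨n - 1, by omega⟩ = true)
    (hq : qGraph (ThresholdGraph b) = 2) :
    (n + 1) / 2 ≤ (Finset.univ.filter (fun i : Fin n => b i = true)).card := by
  classical
  -- extract a matrix with two distinct eigenvalues
  have hne : (numEig '' SMat (ThresholdGraph b)).Nonempty := by
    by_contra h
    rw [Set.not_nonempty_iff_eq_empty] at h
    rw [qGraph, h, Nat.sInf_empty] at hq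
    omega
  have h2 : 2 ∈ numEig '' SMat (ThresholdGraph b) := hq ▸ Nat.sInf_mem hne
  obtain ⟨A, ⟨hs, hpat⟩, hnum⟩ := h2
  rw [numEig, Set.ncard_eq_two] at hnum
  obtain ⟨l, m, hlm, hspec⟩ := hnum
  have hev : ∀ x ∈ spectrum ℝ A, x = l ∨ x = m := by
    intro x hx; rw [hspec] at hx; simpa using hx
  have key := quad_zero hs l m hev
  have hAA : A * A = (l + m) • A - (l * m) • (1 : Matrix (Fin n) (Fin n) ℝ) := by
    have hexp : (A - l • 1) * (A - m • 1)
        = A * A - (l + m) • A + (l * m) • (1 : Matrix (Fin n) (Fin n) ℝ) := by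
      simp only [Matrix.sub_mul, Matrix.mul_sub, Matrix.smul_mul, Matrix.mul_smul,
        Matrix.one_mul, Matrix.mul_one]
      module
    rw [hexp] at key
    calc A * A = A * A - (l + m) • A + (l * m) • 1 + ((l + m) • A - (l * m) • 1) := by module
      _ = _ := by rw [key]; module
  -- symmetry on entries
  have hsE : ∀ i j : Fin n, A i j = A j i := by
    intro i j
    exact (congrFun (congrFun hs i) j).symm
  -- adjacency facts
  set ℓ : Fin n := ⟨n - 1, by omega⟩ with hl
  have hbl : b ℓ = true := hbn
  have hlast : ∀ i : Fin n, b i = false → (ThresholdGraph b).Adj i ℓ := by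
    intro i hi
    have hne : i ≠ ℓ := by
      intro h; rw [h, hbl] at hi; cases hi
    have hlt : i < ℓ := by
      have h1 : i.val ≠ n - 1 := fun h => hne (Fin.ext h)
      have h2 := i.isLt
      rw [Fin.lt_def]
      show (i : ℕ) < n - 1
      omega
    exact ⟨hne, Or.inl ⟨hlt, hbl⟩⟩
  have hAlast : ∀ i : Fin n, b i = false → A i ℓ ≠ 0 := fun i hi =>
    (hpat i ℓ (hlast i hi).1).mpr (hlast i hi)
  have hff : ∀ i j : Fin n, b i = false → b j = false → i ≠ j → A i j = 0 := by
    intro i j hi hj hij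
    by_contra h
    rcases ((hpat i j hij).mp h).2 with ⟨_, hbj⟩ | ⟨_, hbi⟩
    · rw [hj] at hbj; cases hbj
    · rw [hi] at hbi; cases hbi
  -- row orthogonality for nonadjacent distinct pairs
  have hrow : ∀ i j : Fin n, i ≠ j → A i j = 0 → ∑ k, A i k * A j k = 0 := by
    intro i j hij h0
    have hE := congrFun (congrFun hAA i) j
    rw [Matrix.mul_apply] at hE
    simp only [Matrix.sub_apply, Matrix.smul_apply, Matrix.one_apply, smul_eq_mul,
      if_neg hij, h0, mul_zero, zero_sub, sub_zero, neg_zero] at hE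
    calc ∑ k, A i k * A j k = ∑ k, A i k * A k j := by
          exact Finset.sum_congr rfl fun k _ => by rw [hsE j k]
      _ = 0 := hE
  -- the row matrix indexed by false vertices, columns true vertices
  have horthB : ∀ i j : {x : Fin n // b x = false}, i ≠ j →
      ∑ t : {x : Fin n // b x = true}, A i.1 t.1 * A j.1 t.1 = 0 := by
    intro i j hij
    have hij' : i.1 ≠ j.1 := fun h => hij (Subtype.ext h)
    have hfull := hrow i.1 j.1 hij' (hff _ _ i.2 j.2 hij')
    have hsplit := Finset.sum_filter_add_sum_filter_not Finset.univ
      (fun k : Fin n => b k = true) (fun k => A i.1 k * A j.1 k)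
    have hT : ∑ k ∈ Finset.univ.filter (fun k : Fin n => b k = true), A i.1 k * A j.1 k
        = ∑ t : {x : Fin n // b x = true}, A i.1 t.1 * A j.1 t.1 :=
      Finset.sum_subtype _ (by simp) _
    have hF : ∑ k ∈ Finset.univ.filter (fun k : Fin n => ¬ b k = true), A i.1 k * A j.1 k
        = 0 := by
      apply Finset.sum_eq_zero
      intro k hk
      have hkf : b k = false := by simpa using (Finset.mem_filter.mp hk).2
      by_cases hki : k = i.1
      · rw [hki, hff j.1 i.1 j.2 i.2 (Ne.symm hij'), mul_zero]
      · rw [hff _ _ i.2 hkf (fun h => hki h.symm), zero_mul]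
    rw [hT, hF, add_zero, hfull] at hsplit
    exact hsplit
  set B : Matrix {x : Fin n // b x = false} {x : Fin n // b x = true} ℝ :=
    Matrix.of (fun i t => A i.1 t.1) with hB
  set d : {x : Fin n // b x = false} → ℝ :=
    fun i => ∑ t : {x : Fin n // b x = true}, A i.1 t.1 * A i.1 t.1 with hd
  have hBBt : B * Bᵀ = Matrix.diagonal d := by
    ext i j
    rw [Matrix.mul_apply]
    by_cases h : i = j
    · subst h
      rw [Matrix.diagonal_apply_eq]
      simp [hB, hd]
    · rw [Matrix.diagonal_apply_ne _ h]
      simpa [hB] using horthB i j h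
  have hdpos : ∀ i, d i ≠ 0 := by
    intro i
    have hpos : 0 < d i := by
      apply Finset.sum_pos'
      · intro t _
        exact mul_self_nonneg _
      · refine ⟨⟨ℓ, hbl⟩, Finset.mem_univ _, ?_⟩
        exact mul_self_pos.mpr (hAlast i.1 i.2)
    exact ne_of_gt hpos
  have hr1 : (B * Bᵀ).rank = Fintype.card {x : Fin n // b x = false} := by
    rw [hBBt, Matrix.rank_diagonal]
    exact Fintype.card_congr (Equiv.subtypeUnivEquiv hdpos)
  have hr2 : (B * Bᵀ).rank ≤ B.rank := Matrix.rank_mul_le_left _ _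
  have hr3 : B.rank ≤ Fintype.card {x : Fin n // b x = true} := Matrix.rank_le_card_width _
  have hcard : Fintype.card {x : Fin n // b x = false}
      ≤ Fintype.card {x : Fin n // b x = true} := by omega
  have hcF : Fintype.card {x : Fin n // b x = false}
      = (Finset.univ.filter (fun i : Fin n => b i = false)).card := Fintype.card_subtype _
  have hcT : Fintype.card {x : Fin n // b x = true}
      = (Finset.univ.filter (fun i : Fin n => b i = true)).card := Fintype.card_subtype _
  have hsum : (Finset.univ.filter (fun i : Fin n => b i = true)).card
      + (Finset.univ.filter (fun i : Fin n => b i = false)).card = n := by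
    have h := Finset.card_filter_add_card_filter_not
      (s := Finset.univ) (p := fun i : Fin n => b i = true)
    simpa [Bool.not_eq_true, Finset.card_univ] using h
  omega
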